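/- For a nonzero vector s ∈ R^{n+m}, the matrix B_{k+1} defined by the J-symmetric update B_{k+1} = B_k + (J s r^T J + r s^T)/(s^T s) - ((J s)^T r)(J s s^T)/((s^T s)^2) with r = y - B_k s is J-symmetric whenever B_k is J-symmetric, and satisfies the secant condition B_{k+1} s = y. -/

import Mathlib

open Matrix

/-- `J = diag(I_n, -I_m)` as a block matrix. -/
noncomputable def Jmat (n m : ℕ) : Matrix (Fin n ⊕ Fin m) (Fin n ⊕ Fin m) ℝ :=
  Matrix.fromBlocks 1 0 0 (-1)

/-- The `J`-symmetric quasi-Newton update with `r = y - B_k s`: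
`B_{k+1} = B_k + (Js rᵀ J + r sᵀ)/(sᵀs) - ((Js)ᵀ r)(Js sᵀ)/(sᵀs)²`.
(Note `rᵀJ = (Jr)ᵀ` since `J` is symmetric.) -/
noncomputable def JsymmUpdate (n m : ℕ)
    (Bk : Matrix (Fin n ⊕ Fin m) (Fin n ⊕ Fin m) ℝ)
    (s y : (Fin n ⊕ Fin m) → ℝ) : Matrix (Fin n ⊕ Fin m) (Fin n ⊕ Fin m) ℝ :=
  let J := Jmat n m
  let r := y - Bk.mulVec s
  Bk + (s ⬝ᵥ s)⁻¹ • (Matrix.vecMulVec (J.mulVec s) (J.mulVec r)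
      + Matrix.vecMulVec r s)
    - (((J.mulVec s) ⬝ᵥ r) / (s ⬝ᵥ s) ^ 2) • Matrix.vecMulVec (J.mulVec s) s

lemma Jmat_transpose (n m : ℕ) : (Jmat n m)ᵀ = Jmat n m := by
  simp [Jmat, Matrix.fromBlocks_transpose]

lemma Jmat_mul_Jmat (n m : ℕ) : Jmat n m * Jmat n m = 1 := by
  simp [Jmat, Matrix.fromBlocks_multiply, ← Matrix.fromBlocks_one]

lemma mul_vecMulVec {α : Type*} [Fintype α] [DecidableEq α]
    (M : Matrix α α ℝ) (a b : α → ℝ) :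
    M * Matrix.vecMulVec a b = Matrix.vecMulVec (M.mulVec a) b := by
  ext i j
  simp [Matrix.vecMulVec_apply, Matrix.mul_apply, Matrix.mulVec, dotProduct,
    Finset.sum_mul, mul_assoc]

lemma vecMulVec_mul {α : Type*} [Fintype α] [DecidableEq α]
    (M : Matrix α α ℝ) (a b : α → ℝ) :
    Matrix.vecMulVec a b * M = Matrix.vecMulVec a (Mᵀ.mulVec b) := by
  ext i j
  simp [Matrix.vecMulVec_apply, Matrix.mul_apply, Matrix.mulVec, dotProduct,
    Finset.mul_sum, mul_assoc, mul_comm, mul_left_comm]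

lemma vecMulVec_mulVec {α : Type*} [Fintype α] [DecidableEq α]
    (a b v : α → ℝ) :
    (Matrix.vecMulVec a b).mulVec v = (b ⬝ᵥ v) • a := by
  ext i
  simp [Matrix.vecMulVec_apply, Matrix.mulVec, dotProduct,
    Finset.mul_sum, mul_assoc, mul_comm, mul_left_comm]

lemma vecMulVec_transpose' {α : Type*} [Fintype α] (a b : α → ℝ) :
    (Matrix.vecMulVec a b)ᵀ = Matrix.vecMulVec b a := by
  ext i j; simp [Matrix.vecMulVec_apply, mul_comm]

lemma dot_Jmul (n m : ℕ) (a b : (Fin n ⊕ Fin m) → ℝ) :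
    (Jmat n m).mulVec a ⬝ᵥ b = (Jmat n m).mulVec b ⬝ᵥ a := by
  rw [dotProduct_comm, Matrix.dotProduct_mulVec]
  nth_rewrite 1 [← Jmat_transpose n m]
  rw [Matrix.vecMul_transpose, dotProduct_comm]

/-- The J-symmetric update preserves J-symmetry (`J M = Mᵀ J`) and
satisfies the secant condition. -/
theorem stmt_3 (n m : ℕ) (Bk : Matrix (Fin n ⊕ Fin m) (Fin n ⊕ Fin m) ℝ)
    (s y : (Fin n ⊕ Fin m) → ℝ) (hs : s ≠ 0)
    (hBk : Jmat n m * Bk = Bkᵀ * Jmat n m) :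
    (Jmat n m * JsymmUpdate n m Bk s y
        = (JsymmUpdate n m Bk s y)ᵀ * Jmat n m) ∧
    (JsymmUpdate n m Bk s y).mulVec s = y := by
  set J := Jmat n m with hJ
  set r := y - Bk.mulVec s with hr
  have hJJ : J * J = 1 := Jmat_mul_Jmat n m
  have hJT : Jᵀ = J := Jmat_transpose n m
  have hJJv : ∀ v, J.mulVec (J.mulVec v) = v := by
    intro v; rw [Matrix.mulVec_mulVec, hJJ, Matrix.one_mulVec]
  have hU : JsymmUpdate n m Bk s y
      = Bk + (s ⬝ᵥ s)⁻¹ • (Matrix.vecMulVec (J.mulVec s) (J.mulVec r)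
          + Matrix.vecMulVec r s)
        - ((J.mulVec s ⬝ᵥ r) / (s ⬝ᵥ s) ^ 2) • Matrix.vecMulVec (J.mulVec s) s := rfl
  constructor
  · rw [hU]
    rw [Matrix.mul_sub, Matrix.mul_add, Matrix.mul_smul, Matrix.mul_add, Matrix.mul_smul,
      Matrix.transpose_sub, Matrix.transpose_add, Matrix.transpose_smul,
      Matrix.transpose_add, Matrix.transpose_smul,
      Matrix.sub_mul, Matrix.add_mul, Matrix.smul_mul, Matrix.add_mul, Matrix.smul_mul]
    rw [hBk]
    congr 1
    congr 2
    · rw [_root_.mul_vecMulVec, _root_.mul_vecMulVec, hJJv,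
        vecMulVec_transpose', vecMulVec_transpose',
        _root_.vecMulVec_mul, _root_.vecMulVec_mul, hJT, hJJv]
      exact add_comm _ _
    · rw [_root_.mul_vecMulVec, hJJv, vecMulVec_transpose', _root_.vecMulVec_mul, hJT, hJJv]
  · rw [hU]
    have hss : s ⬝ᵥ s ≠ 0 := fun h => hs ((dotProduct_self_eq_zero).mp h)
    rw [Matrix.sub_mulVec, Matrix.add_mulVec, Matrix.smul_mulVec,
      Matrix.add_mulVec, Matrix.smul_mulVec, _root_.vecMulVec_mulVec, _root_.vecMulVec_mulVec,
      _root_.vecMulVec_mulVec]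
    have hdot : J.mulVec r ⬝ᵥ s = J.mulVec s ⬝ᵥ r := dot_Jmul n m r s
    rw [hdot]
    set c := J.mulVec s ⬝ᵥ r with hc
    have h1 : (s ⬝ᵥ s)⁻¹ • (c • J.mulVec s + (s ⬝ᵥ s) • r)
        - (c / (s ⬝ᵥ s) ^ 2) • (s ⬝ᵥ s) • J.mulVec s = r := by
      rw [smul_add, smul_smul, smul_smul, smul_smul]
      rw [inv_mul_cancel₀ hss, one_smul]
      have : c / (s ⬝ᵥ s) ^ 2 * (s ⬝ᵥ s) = (s ⬝ᵥ s)⁻¹ * c := by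
        field_simp
      rw [this, add_sub_cancel_left]
    rw [add_sub_assoc, h1, hr]
    abel
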